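/- Let ψ : (0,∞) → (0,∞) be nondecreasing with r ↦ ψ(r)/√r nonincreasing on (0,∞), and let r* > 0 satisfy ψ(r*) ≤ r*. If U > 0 and a, b ≥ 0 satisfy U ≤ a + b·ψ(U), then U ≤ 2a + (1 + b²) r*. -/
import Mathlib


/-- Self-bounding inequality for sub-root functions: if `ψ` is sub-root with
`ψ(r*) ≤ r*` for some `r* > 0`, and `U > 0`, `a, b ≥ 0` satisfy `U ≤ a + b ψ(U)`, then
`U ≤ 2a + (1 + b²) r*`. -/
theorem subroot_self_bounding (ψ : ℝ → ℝ)
    (hpos : ∀ r, 0 < r → 0 < ψ r)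
    (hmono : ∀ r s, 0 < r → r ≤ s → ψ r ≤ ψ s)
    (hsub : ∀ r s, 0 < r → r ≤ s → ψ s / Real.sqrt s ≤ ψ r / Real.sqrt r)
    (rstar : ℝ) (hr : 0 < rstar) (hfix : ψ rstar ≤ rstar)
    (U a b : ℝ) (hU : 0 < U) (ha : 0 ≤ a) (hb : 0 ≤ b)
    (hineq : U ≤ a + b * ψ U) :
    U ≤ 2 * a + (1 + b ^ 2) * rstar := by
  rcases le_or_gt U rstar with h | h
  · nlinarith [sq_nonneg b, hr.le]
  · have hsr : Real.sqrt rstar > 0 := Real.sqrt_pos.mpr hr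
    have hsU : Real.sqrt U > 0 := Real.sqrt_pos.mpr hU
    have key : ψ U / Real.sqrt U ≤ ψ rstar / Real.sqrt rstar := hsub rstar U hr h.le
    have h1 : ψ rstar / Real.sqrt rstar ≤ Real.sqrt rstar := by
      rw [div_le_iff₀ hsr]
      calc ψ rstar ≤ rstar := hfix
        _ = Real.sqrt rstar * Real.sqrt rstar := (Real.mul_self_sqrt hr.le).symm
    have h2 : ψ U ≤ Real.sqrt rstar * Real.sqrt U := by
      have := (div_le_iff₀ hsU).mp (key.trans h1)
      linarith
    -- AM-GM: b * √r* * √U ≤ (b² r* + U)/2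
    have h3 : b * (Real.sqrt rstar * Real.sqrt U) ≤ (b ^ 2 * rstar + U) / 2 := by
      nlinarith [sq_nonneg (b * Real.sqrt rstar - Real.sqrt U),
        Real.sq_sqrt hr.le, Real.sq_sqrt hU.le]
    nlinarith [mul_le_mul_of_nonneg_left h2 hb, hr.le]
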